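/- Let N be odd and let Φ = {φ_1, ..., φ_N} be a unit-norm tight frame for 𝔽^M (𝔽 = ℝ or ℂ) that is biangular with frame angles c_1 ≠ c_2. Then Φ is equidistributed, and its multiplicities m_1, m_2 (satisfying m_1 + m_2 = N − 1) are both even. -/

import Mathlib

open Finset

lemma even_card_symm_pairs' {α : Type*} [Fintype α] [LinearOrder α]
    (P : α → α → Prop) [∀ a b, Decidable (P a b)]
    (hsymm : ∀ a b, P a b → P b a) (hirr : ∀ a, ¬ P a a) :
    Even ((univ ×ˢ univ).filter (fun p : α × α => P p.1 p.2)).card := by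
  classical
  set T := (univ ×ˢ univ).filter (fun p : α × α => P p.1 p.2) with hT
  set T₁ := T.filter (fun p : α × α => p.1 < p.2) with hT1
  set T₂ := T.filter (fun p : α × α => p.2 < p.1) with hT2
  have hunion : T = T₁ ∪ T₂ := by
    ext p
    simp only [hT1, hT2, mem_union, mem_filter, hT]
    constructor
    · rintro ⟨hp, hP⟩
      rcases lt_trichotomy p.1 p.2 with h | h | h
      · exact Or.inl ⟨⟨hp, hP⟩, h⟩
      · exact absurd hP (by rw [show p.1 = p.2 from h]; exact hirr p.2)
      · exact Or.inr ⟨⟨hp, hP⟩, h⟩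
    · rintro (⟨h, _⟩ | ⟨h, _⟩) <;> exact h
  have hdisj : Disjoint T₁ T₂ := by
    rw [Finset.disjoint_left]
    rintro p hp hq
    simp only [hT1, hT2, mem_filter] at hp hq
    exact absurd hq.2 (not_lt.2 hp.2.le)
  have hbij : T₁.card = T₂.card := by
    apply Finset.card_bij (fun p _ => Prod.swap p)
    · rintro p hp
      simp only [hT1, hT2, hT, mem_filter, mem_product, mem_univ, true_and] at hp ⊢
      exact ⟨hsymm _ _ hp.1, hp.2⟩
    · rintro p hp q hq h
      exact Prod.swap_injective h
    · rintro p hp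
      refine ⟨Prod.swap p, ?_, (Prod.swap_swap p).symm⟩
      simp only [hT1, hT2, hT, mem_filter, mem_product, mem_univ, true_and] at hp ⊢
      exact ⟨hsymm _ _ hp.1, hp.2⟩
  rw [hunion, card_union_of_disjoint hdisj, hbij]
  exact ⟨T₂.card, rfl⟩

lemma energy_aux {𝕜 : Type*} [RCLike 𝕜] {M N : ℕ}
    (φ : Fin N → EuclideanSpace 𝕜 (Fin M))
    (hunit : ∀ j, ‖φ j‖ = 1)
    (htight : ∀ x : EuclideanSpace 𝕜 (Fin M),
      ∑ j, (inner 𝕜 (φ j) x : 𝕜) • φ j = ((N : 𝕜) / M) • x)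
    (j : Fin N) :
    ∑ l, (‖(inner 𝕜 (φ j) (φ l) : 𝕜)‖ ^ 2 : ℝ) = (N : ℝ) / M := by
  have h := congrArg (fun y => (inner 𝕜 (φ j) y : 𝕜)) (htight (φ j))
  simp only [inner_sum, inner_smul_right] at h
  have hterm : ∀ l, (inner 𝕜 (φ l) (φ j) : 𝕜) * inner 𝕜 (φ j) (φ l)
      = ((‖(inner 𝕜 (φ j) (φ l) : 𝕜)‖ ^ 2 : ℝ) : 𝕜) := by
    intro l
    rw [← inner_conj_symm (φ l) (φ j)]; rw [RCLike.conj_mul]; push_cast; ring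
  rw [Finset.sum_congr rfl (fun l _ => hterm l)] at h
  rw [inner_self_eq_norm_sq_to_K, hunit j] at h
  push_cast at h
  have h2 : ((∑ l, (‖(inner 𝕜 (φ j) (φ l) : 𝕜)‖ ^ 2 : ℝ) : ℝ) : 𝕜) = (((N : ℝ) / M : ℝ) : 𝕜) := by
    push_cast
    simpa using h
  exact_mod_cast h2

/-- If `N` is odd and `Φ = {φ_1, ..., φ_N}` is a biangular unit-norm
tight frame for `𝔽^M` with frame angles `c₁ ≠ c₂`, then `Φ` is equidistributed and its
multiplicities `m₁, m₂` (with `m₁ + m₂ = N - 1`) are both even. -/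
theorem biangular_tight_frame_odd_even_multiplicities {𝕜 : Type*} [RCLike 𝕜]
    {M N : ℕ} (hodd : Odd N)
    (φ : Fin N → EuclideanSpace 𝕜 (Fin M))
    (hunit : ∀ j, ‖φ j‖ = 1)
    (htight : ∀ x : EuclideanSpace 𝕜 (Fin M),
      ∑ j, (inner 𝕜 (φ j) x : 𝕜) • φ j = ((N : 𝕜) / M) • x)
    (c₁ c₂ : ℝ) (hc : c₁ ≠ c₂)
    (hangles : {r : ℝ | ∃ j l, j ≠ l ∧ ‖(inner 𝕜 (φ j) (φ l) : 𝕜)‖ = r} = {c₁, c₂}) :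
    ∃ m₁ m₂ : ℕ, m₁ + m₂ = N - 1 ∧ Even m₁ ∧ Even m₂ ∧
      ∀ j, {l | l ≠ j ∧ ‖(inner 𝕜 (φ j) (φ l) : 𝕜)‖ = c₁}.ncard = m₁ ∧
           {l | l ≠ j ∧ ‖(inner 𝕜 (φ j) (φ l) : 𝕜)‖ = c₂}.ncard = m₂ := by
  classical
  have hN0 : 0 < N := hodd.pos
  set A : ℝ → Fin N → Finset (Fin N) :=
    fun c j => univ.filter (fun l => l ≠ j ∧ ‖(inner 𝕜 (φ j) (φ l) : 𝕜)‖ = c) with hA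
  -- every off-diagonal angle is c₁ or c₂
  have hmem : ∀ j l, l ≠ j →
      ‖(inner 𝕜 (φ j) (φ l) : 𝕜)‖ = c₁ ∨ ‖(inner 𝕜 (φ j) (φ l) : 𝕜)‖ = c₂ := by
    intro j l hlj
    have : ‖(inner 𝕜 (φ j) (φ l) : 𝕜)‖ ∈ ({c₁, c₂} : Set ℝ) := by
      rw [← hangles]; exact ⟨j, l, Ne.symm hlj, rfl⟩
    simpa using this
  -- nonnegativity of the angles
  have hc₁0 : 0 ≤ c₁ := by
    have : c₁ ∈ {r : ℝ | ∃ j l, j ≠ l ∧ ‖(inner 𝕜 (φ j) (φ l) : 𝕜)‖ = r} := by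
      rw [hangles]; exact Or.inl rfl
    obtain ⟨j, l, _, h⟩ := this
    exact h ▸ norm_nonneg _
  have hc₂0 : 0 ≤ c₂ := by
    have : c₂ ∈ {r : ℝ | ∃ j l, j ≠ l ∧ ‖(inner 𝕜 (φ j) (φ l) : 𝕜)‖ = r} := by
      rw [hangles]; exact Or.inr rfl
    obtain ⟨j, l, _, h⟩ := this
    exact h ▸ norm_nonneg _
  have hsq : c₁ ^ 2 ≠ c₂ ^ 2 := by
    intro h
    exact hc (by rw [← Real.sqrt_sq hc₁0, ← Real.sqrt_sq hc₂0, h])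
  -- the two angle classes at each j are disjoint and cover everything else
  have hdisj : ∀ j, Disjoint (A c₁ j) (A c₂ j) := by
    intro j
    rw [Finset.disjoint_left]
    intro l h1 h2
    simp only [hA, mem_filter] at h1 h2
    exact hc (h1.2.2 ▸ h2.2.2)
  have hun : ∀ j, A c₁ j ∪ A c₂ j = univ.erase j := by
    intro j
    ext l
    simp only [hA, mem_union, mem_filter, mem_erase, mem_univ, true_and, and_true]
    constructor
    · rintro (⟨h, _⟩ | ⟨h, _⟩) <;> exact h
    · intro h
      rcases hmem j l h with h' | h'
      · exact Or.inl ⟨h, h'⟩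
      · exact Or.inr ⟨h, h'⟩
  have hcard : ∀ j, (A c₁ j).card + (A c₂ j).card = N - 1 := by
    intro j
    rw [← card_union_of_disjoint (hdisj j), hun j, card_erase_of_mem (mem_univ j),
      card_univ, Fintype.card_fin]
  -- the energy identity gives a linear relation
  have hsplit : ∀ j, ((A c₁ j).card : ℝ) * c₁ ^ 2 + ((A c₂ j).card : ℝ) * c₂ ^ 2
      = (N : ℝ) / M - 1 := by
    intro j
    have he := energy_aux φ hunit htight j
    have hself : ‖(inner 𝕜 (φ j) (φ j) : 𝕜)‖ = 1 := by
      rw [inner_self_eq_norm_sq_to_K, hunit]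
      simp
    have hsplit1 : (∑ l ∈ univ.erase j, (‖(inner 𝕜 (φ j) (φ l) : 𝕜)‖ ^ 2 : ℝ))
        + ‖(inner 𝕜 (φ j) (φ j) : 𝕜)‖ ^ 2 = ∑ l, (‖(inner 𝕜 (φ j) (φ l) : 𝕜)‖ ^ 2 : ℝ) :=
      Finset.sum_erase_add _ _ (mem_univ j)
    have hs1 : ∑ l ∈ A c₁ j, (‖(inner 𝕜 (φ j) (φ l) : 𝕜)‖ ^ 2 : ℝ)
        = ((A c₁ j).card : ℝ) * c₁ ^ 2 := by
      rw [Finset.sum_congr rfl (fun l hl => by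
        simp only [hA, mem_filter] at hl
        rw [hl.2.2])]
      rw [Finset.sum_const, nsmul_eq_mul]
    have hs2 : ∑ l ∈ A c₂ j, (‖(inner 𝕜 (φ j) (φ l) : 𝕜)‖ ^ 2 : ℝ)
        = ((A c₂ j).card : ℝ) * c₂ ^ 2 := by
      rw [Finset.sum_congr rfl (fun l hl => by
        simp only [hA, mem_filter] at hl
        rw [hl.2.2])]
      rw [Finset.sum_const, nsmul_eq_mul]
    have : ∑ l ∈ univ.erase j, (‖(inner 𝕜 (φ j) (φ l) : 𝕜)‖ ^ 2 : ℝ)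
        = ((A c₁ j).card : ℝ) * c₁ ^ 2 + ((A c₂ j).card : ℝ) * c₂ ^ 2 := by
      rw [← hun j, Finset.sum_union (hdisj j), hs1, hs2]
    rw [← this]
    rw [hself, one_pow] at hsplit1
    linarith [hsplit1, he]
  -- equidistribution
  have hequi₁ : ∀ i j, (A c₁ i).card = (A c₁ j).card := by
    intro i j
    have h1 := hsplit i
    have h2 := hsplit j
    have h3 : ((A c₁ i).card : ℝ) + ((A c₂ i).card : ℝ)
        = ((A c₁ j).card : ℝ) + ((A c₂ j).card : ℝ) := by
      exact_mod_cast congrArg (Nat.cast : ℕ → ℝ) ((hcard i).trans (hcard j).symm)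
    have key : (((A c₁ i).card : ℝ) - ((A c₁ j).card : ℝ)) * (c₁ ^ 2 - c₂ ^ 2) = 0 := by
      linear_combination h1 - h2 - c₂ ^ 2 * h3
    rcases mul_eq_zero.mp key with h | h
    · exact_mod_cast sub_eq_zero.mp h
    · exact absurd (sub_eq_zero.mp h) hsq
  have hequi₂ : ∀ i j, (A c₂ i).card = (A c₂ j).card := by
    intro i j
    have := hequi₁ i j
    have h1 := hcard i
    have h2 := hcard j
    omega
  -- parity
  have hpar : ∀ c : ℝ, Even (N * (A c ⟨0, hN0⟩).card) := by
    intro c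
    have hT := even_card_symm_pairs'
      (fun a b : Fin N => b ≠ a ∧ ‖(inner 𝕜 (φ a) (φ b) : 𝕜)‖ = c)
      (fun a b ⟨h1, h2⟩ => ⟨h1.symm, by rw [← h2, norm_inner_symm]⟩)
      (fun a ⟨h1, _⟩ => h1 rfl)
    have hsum : ((univ ×ˢ univ).filter
        (fun p : Fin N × Fin N => p.2 ≠ p.1 ∧ ‖(inner 𝕜 (φ p.1) (φ p.2) : 𝕜)‖ = c)).card
        = ∑ j, (A c j).card := by
      rw [Finset.card_filter, Finset.sum_product]
      exact Finset.sum_congr rfl (fun j _ => (Finset.card_filter _ _).symm)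
    rw [hsum] at hT
    have heq : ∀ c' : ℝ, (∀ i j : Fin N, (A c' i).card = (A c' j).card) →
        ∑ j, (A c' j).card = N * (A c' ⟨0, hN0⟩).card := by
      intro c' h
      rw [Finset.sum_congr rfl (fun j _ => h j ⟨0, hN0⟩), Finset.sum_const, card_univ,
        Fintype.card_fin, smul_eq_mul]
    by_cases hcc : c = c₁
    · subst hcc; rwa [heq c hequi₁] at hT
    · by_cases hcc2 : c = c₂
      · subst hcc2; rwa [heq c hequi₂] at hT
      · have : A c ⟨0, hN0⟩ = ∅ := by
          ext l
          simp only [hA, mem_filter, mem_univ, true_and, Finset.notMem_empty, iff_false]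
          rintro ⟨h1, h2⟩
          rcases hmem _ _ h1 with h | h
          · exact hcc (h2 ▸ h.symm ▸ rfl)
          · exact hcc2 (h2 ▸ h.symm ▸ rfl)
        simp [this]

  have hm₁ : Even ((A c₁ ⟨0, hN0⟩).card) := by
    rcases Nat.even_mul.mp (hpar c₁) with h | h
    · exact absurd h (Nat.not_even_iff_odd.mpr hodd)
    · exact h
  have hm₂ : Even ((A c₂ ⟨0, hN0⟩).card) := by
    rcases Nat.even_mul.mp (hpar c₂) with h | h
    · exact absurd h (Nat.not_even_iff_odd.mpr hodd)
    · exact h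
  refine ⟨(A c₁ ⟨0, hN0⟩).card, (A c₂ ⟨0, hN0⟩).card, hcard _, hm₁, hm₂, fun j => ?_⟩
  constructor
  · have : {l | l ≠ j ∧ ‖(inner 𝕜 (φ j) (φ l) : 𝕜)‖ = c₁} = ↑(A c₁ j) := by
      ext l; simp [hA]
    rw [this, Set.ncard_coe_finset]
    exact hequi₁ j ⟨0, hN0⟩
  · have : {l | l ≠ j ∧ ‖(inner 𝕜 (φ j) (φ l) : 𝕜)‖ = c₂} = ↑(A c₂ j) := by
      ext l; simp [hA]
    rw [this, Set.ncard_coe_finset]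
    exact hequi₂ j ⟨0, hN0⟩
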